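/- Let G be a finite directed acyclic simple graph and let H_1, H_2 ⊆ G be maximal rooted subgraphs with roots v_1 and v_2 respectively. If there is a graph isomorphism between H_1 and H_2 mapping v_1 to v_2 such that every pair of corresponding vertices has the same in-degree in G, then P(v_1) = P(v_2), where P(v) is the probability that v is visited by the backward random walk on G. -/

import Mathlib

open scoped Classical

/-- In-degree of `v` in `G`. -/
noncomputable def indeg {V : Type} [Fintype V] (adj : V → V → Prop) (v : V) : ℕ :=
  (Finset.univ.filter (fun u => adj u v)).card

/-- The set of vertices reachable from `v` (vertex set of the maximal rooted
subgraph with root `v`). -/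
def reach {V : Type} (adj : V → V → Prop) (v : V) : Set V :=
  {u | Relation.ReflTransGen adj v u}

/-- A complete backward walk. -/
def IsMaxBWalk {V : Type} (adj : V → V → Prop) (w : List V) : Prop :=
  w ≠ [] ∧ w.Chain' (fun a b => adj b a) ∧ ∀ l ∈ w.getLast?, ∀ u, ¬ adj u l

/-- The probability of a given complete backward walk. -/
noncomputable def walkProb {V : Type} [Fintype V] (adj : V → V → Prop) (w : List V) : ℝ :=
  (Fintype.card V : ℝ)⁻¹ * ((w.zip w.tail).map (fun p => ((indeg adj p.1 : ℝ))⁻¹)).prod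

/-- `P v`: the probability that vertex `v` is visited by the backward random walk. -/
noncomputable def visitProb {V : Type} [Fintype V] (adj : V → V → Prop) (v : V) : ℝ :=
  ∑' w : List V, if IsMaxBWalk adj w ∧ v ∈ w then walkProb adj w else 0

namespace Stmt5Aux

set_option linter.unusedSectionVars false
variable {V : Type} [Fintype V] (adj : V → V → Prop)

/-- product of inverse indegrees along the walk (all but last element). -/
noncomputable def stepProd (w : List V) : ℝ :=
  ((w.zip w.tail).map (fun p => ((indeg adj p.1 : ℝ))⁻¹)).prod

lemma walkProb_eq (w : List V) : walkProb adj w = (Fintype.card V : ℝ)⁻¹ * stepProd adj w := rfl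

@[simp] lemma stepProd_nil : stepProd adj [] = 1 := rfl
@[simp] lemma stepProd_singleton (a : V) : stepProd adj [a] = 1 := rfl
lemma stepProd_cons_cons (a b : V) (t : List V) :
    stepProd adj (a :: b :: t) = ((indeg adj a : ℝ))⁻¹ * stepProd adj (b :: t) := by
  simp [stepProd]

lemma stepProd_append_cons (p : List V) (x : V) (t : List V) :
    stepProd adj (p ++ x :: t) = stepProd adj (p ++ [x]) * stepProd adj (x :: t) := by
  induction p with
  | nil => simp
  | cons a p ih =>
    cases p with
    | nil => simp [stepProd_cons_cons]
    | cons b p' =>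
      simp only [List.cons_append] at *
      rw [stepProd_cons_cons, stepProd_cons_cons, ih, mul_assoc]

/-- walks are duplicate-free in an acyclic graph -/
lemma nodup_of_chain (hacyc : ∀ x : V, ¬ Relation.TransGen adj x x)
    {w : List V} (hc : w.Chain' (fun a b => adj b a)) : w.Nodup := by
  haveI : IsTrans V (Relation.TransGen (fun a b => adj b a)) :=
    ⟨fun _ _ _ h h' => Relation.TransGen.trans h h'⟩
  have h1 : w.Chain' (Relation.TransGen (fun a b => adj b a)) :=
    hc.imp (fun _ _ h => Relation.TransGen.single h)
  have h2 : w.Pairwise (Relation.TransGen (fun a b => adj b a)) :=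
    List.isChain_iff_pairwise.1 h1
  refine h2.imp ?_
  rintro a b h rfl
  exact hacyc a ((Relation.transGen_swap).1 h)

/-- every element of a backward chain can reach the head -/
lemma reach_head {w : List V} (hc : w.Chain' (fun a b => adj b a)) {u : V}
    (hh : w.head? = some u) : ∀ x ∈ w, Relation.ReflTransGen adj x u := by
  induction w generalizing u with
  | nil => simp
  | cons a t ih =>
    simp only [List.head?_cons, Option.some.injEq] at hh
    subst hh
    intro x hx
    rcases List.mem_cons.1 hx with rfl | hx
    · exact Relation.ReflTransGen.refl
    · cases t with
      | nil => simp at hx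
      | cons b t' =>
        rw [List.Chain', List.isChain_cons_cons] at hc
        have := ih hc.2 (u := b) rfl x hx
        exact this.trans (Relation.ReflTransGen.single hc.1)

/-- every element of a backward chain is reachable from the last element -/
lemma reach_last {w : List V} (hc : w.Chain' (fun a b => adj b a)) {v : V}
    (hl : w.getLast? = some v) : ∀ x ∈ w, Relation.ReflTransGen adj v x := by
  induction w with
  | nil => simp
  | cons a t ih =>
    intro x hx
    cases t with
    | nil =>
      simp only [List.getLast?_singleton, Option.some.injEq] at hl
      simp only [List.mem_singleton] at hx
      subst hl; subst hx; exact Relation.ReflTransGen.refl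
    | cons b t' =>
      rw [List.Chain', List.isChain_cons_cons] at hc
      rw [List.getLast?_cons_cons] at hl
      rcases List.mem_cons.1 hx with rfl | hx
      · have := ih hc.2 hl b List.mem_cons_self
        exact this.trans (Relation.ReflTransGen.single hc.1)
      · exact ih hc.2 hl x hx

/-! ### Finsets of walks -/

lemma finite_nodup : {l : List V | l.Nodup}.Finite :=
  (List.finite_length_le V (Fintype.card V)).subset (fun _ hl => hl.length_le_card)

noncomputable def allND (V : Type) [Fintype V] : Finset (List V) :=
  (finite_nodup (V := V)).toFinset

@[simp] lemma mem_allND {l : List V} : l ∈ allND V ↔ l.Nodup := Set.Finite.mem_toFinset _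

noncomputable def prefF (v : V) : Finset (List V) :=
  (allND V).filter (fun w => w ≠ [] ∧ w.Chain' (fun a b => adj b a) ∧ w.getLast? = some v)

noncomputable def suffF (v : V) : Finset (List V) :=
  (allND V).filter (fun w =>
    w.head? = some v ∧ w.Chain' (fun a b => adj b a) ∧ ∀ l ∈ w.getLast?, ∀ u, ¬ adj u l)

noncomputable def walkF (v : V) : Finset (List V) :=
  (allND V).filter (fun w => IsMaxBWalk adj w ∧ v ∈ w)

lemma mem_prefF {v : V} {w : List V} :
    w ∈ prefF adj v ↔ w.Nodup ∧ w ≠ [] ∧ w.Chain' (fun a b => adj b a) ∧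
      w.getLast? = some v := by
  simp [prefF, Finset.mem_filter, and_assoc]

lemma mem_suffF {v : V} {w : List V} :
    w ∈ suffF adj v ↔ w.Nodup ∧ w.head? = some v ∧ w.Chain' (fun a b => adj b a) ∧
      ∀ l ∈ w.getLast?, ∀ u, ¬ adj u l := by
  simp [suffF, Finset.mem_filter, and_assoc]

lemma mem_walkF {v : V} {w : List V} :
    w ∈ walkF adj v ↔ w.Nodup ∧ IsMaxBWalk adj w ∧ v ∈ w := by
  simp [walkF, Finset.mem_filter, and_assoc]

/-! ### The suffix sum equals one -/

lemma suff_sum (hacyc : ∀ x : V, ¬ Relation.TransGen adj x x) (v : V) :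
    ∑ s ∈ suffF adj v, stepProd adj s = 1 := by
  have hwf : WellFounded (fun a b : V => adj a b) := by
    haveI : IsTrans V (Relation.TransGen adj) := ⟨fun _ _ _ h h' => h.trans h'⟩
    haveI : IsIrrefl V (Relation.TransGen adj) := ⟨hacyc⟩
    exact Subrelation.wf (fun h => Relation.TransGen.single h)
      (Finite.wellFounded_of_trans_of_irrefl _)
  refine hwf.induction (C := fun v => ∑ s ∈ suffF adj v, stepProd adj s = 1) v ?_
  clear v
  intro v ih
  by_cases hsrc : ∀ u, ¬ adj u v
  · have hset : suffF adj v = {[v]} := by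
      ext s
      simp only [mem_suffF, Finset.mem_singleton]
      constructor
      · rintro ⟨hnd, hh, hc, hl⟩
        cases s with
        | nil => simp at hh
        | cons a t =>
          simp only [List.head?_cons, Option.some.injEq] at hh
          subst hh
          cases t with
          | nil => rfl
          | cons b t' =>
            rw [List.Chain', List.isChain_cons_cons] at hc
            exact absurd hc.1 (hsrc b)
      · rintro rfl
        refine ⟨List.nodup_singleton v, rfl, List.isChain_singleton v, ?_⟩
        intro l hl u
        simp only [List.getLast?_singleton, Option.mem_def, Option.some.injEq] at hl
        subst hl
        exact hsrc u
    rw [hset]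
    simp
  · push_neg at hsrc
    have hsplit : suffF adj v =
        (Finset.univ.filter (fun u => adj u v)).biUnion
          (fun u => (suffF adj u).image (List.cons v)) := by
      ext s
      simp only [mem_suffF, Finset.mem_biUnion, Finset.mem_filter, Finset.mem_univ, true_and,
        Finset.mem_image]
      constructor
      · rintro ⟨hnd, hh, hc, hl⟩
        cases s with
        | nil => simp at hh
        | cons a t =>
          simp only [List.head?_cons, Option.some.injEq] at hh
          have hh2 := hh.symm
          subst hh2
          cases t with
          | nil =>
            obtain ⟨u, hu⟩ := hsrc
            exact absurd (hl v (by simp) u) (not_not.2 hu)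
          | cons b t' =>
            rw [List.Chain', List.isChain_cons_cons] at hc
            refine ⟨b, hc.1, ⟨b :: t', ⟨(List.nodup_cons.1 hnd).2, rfl, hc.2, ?_⟩, rfl⟩⟩
            intro l hl' u
            exact hl l (by rw [List.getLast?_cons_cons]; exact hl') u
      · rintro ⟨u, huv, t, ht, rfl⟩
        obtain ⟨hnd, hh, hc, hl⟩ := ht
        cases t with
        | nil => simp at hh
        | cons b t' =>
          simp only [List.head?_cons, Option.some.injEq] at hh
          have hh2 := hh.symm
          subst hh2
          have hvnot : v ∉ u :: t' := by
            intro hmem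
            have h1 : Relation.ReflTransGen adj v u :=
              reach_head adj hc rfl v hmem
            exact hacyc v (Relation.TransGen.tail' h1 huv)
          refine ⟨List.nodup_cons.2 ⟨hvnot, hnd⟩, rfl, List.isChain_cons_cons.2 ⟨huv, hc⟩, ?_⟩
          intro l hl' x
          refine hl l ?_ x
          rwa [List.getLast?_cons_cons] at hl'
    rw [hsplit, Finset.sum_biUnion]
    · have hterm : ∀ u ∈ Finset.univ.filter (fun u => adj u v),
          ∑ s ∈ (suffF adj u).image (List.cons v), stepProd adj s
            = ((indeg adj v : ℝ))⁻¹ := by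
        intro u hu
        rw [Finset.mem_filter] at hu
        rw [Finset.sum_image (by intro x _ y _ h; exact (List.cons.inj h).2)]
        have : ∀ t ∈ suffF adj u, stepProd adj (v :: t)
            = ((indeg adj v : ℝ))⁻¹ * stepProd adj t := by
          intro t ht
          obtain ⟨hnd, hh, hc, hl⟩ := (mem_suffF adj).1 ht
          cases t with
          | nil => simp at hh
          | cons b t' => rw [stepProd_cons_cons]
        rw [Finset.sum_congr rfl this, ← Finset.mul_sum, ih u hu.2, mul_one]
      rw [Finset.sum_congr rfl hterm]
      have hcard : (Finset.univ.filter (fun u => adj u v)).card = indeg adj v := rfl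
      have hpos : indeg adj v ≠ 0 := by
        obtain ⟨u, hu⟩ := hsrc
        have : u ∈ Finset.univ.filter (fun u => adj u v) := by
          simp [Finset.mem_filter, hu]
        intro h0
        rw [← hcard, Finset.card_eq_zero] at h0
        simp [h0] at this
      rw [Finset.sum_const, hcard, nsmul_eq_mul]
      field_simp
    · intro u₁ h₁ u₂ h₂ hne
      rw [Function.onFun_apply, Finset.disjoint_left]
      intro s hs₁ hs₂
      rw [Finset.mem_image] at hs₁ hs₂
      obtain ⟨t₁, ht₁, rfl⟩ := hs₁
      obtain ⟨t₂, ht₂, heq⟩ := hs₂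
      have := (List.cons.inj heq).2
      subst this
      have h1 := ((mem_suffF adj).1 ht₁).2.1
      have h2 := ((mem_suffF adj).1 ht₂).2.1
      rw [h1] at h2
      exact hne (Option.some.inj h2)

/-! ### Decomposition of complete walks through `v` -/

lemma head?_dropWhile_ne {v : V} : ∀ {w : List V}, v ∈ w →
    (w.dropWhile (fun x => decide (x ≠ v))).head? = some v := by
  intro w hv
  induction w with
  | nil => simp at hv
  | cons a t ih =>
    by_cases ha : a = v
    · subst ha
      simp [List.dropWhile_cons]
    · have hv' : v ∈ t := by
        rcases List.mem_cons.1 hv with h | h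
        · exact absurd h.symm ha
        · exact h
      simpa [List.dropWhile_cons, ha] using ih hv'

lemma walk_sum (hacyc : ∀ x : V, ¬ Relation.TransGen adj x x) (v : V) :
    ∑ w ∈ walkF adj v, stepProd adj w
      = (∑ p ∈ prefF adj v, stepProd adj p) * (∑ s ∈ suffF adj v, stepProd adj s) := by
  rw [Finset.sum_mul_sum, ← Finset.sum_product']
  refine Finset.sum_nbij'
    (fun w => (w.takeWhile (fun x => decide (x ≠ v)) ++ [v],
               w.dropWhile (fun x => decide (x ≠ v))))
    (fun q => q.1.dropLast ++ q.2) ?_ ?_ ?_ ?_ ?_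
  · -- forward membership
    intro w hw
    obtain ⟨hnd, ⟨hne, hc, hlast⟩, hv⟩ := (mem_walkF adj).1 hw
    have hAB : w.takeWhile (fun x => decide (x ≠ v)) ++ w.dropWhile (fun x => decide (x ≠ v)) = w :=
      List.takeWhile_append_dropWhile
    have hBh : (w.dropWhile (fun x => decide (x ≠ v))).head? = some v := head?_dropWhile_ne hv
    obtain ⟨t, hBt⟩ : ∃ t, w.dropWhile (fun x => decide (x ≠ v)) = v :: t := by
      cases hB : w.dropWhile (fun x => decide (x ≠ v)) with
      | nil => rw [hB] at hBh; simp at hBh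
      | cons b t =>
        rw [hB] at hBh
        simp only [List.head?_cons, Option.some.injEq] at hBh
        exact ⟨t, by rw [hBh]⟩
    have hpre : (w.takeWhile (fun x => decide (x ≠ v)) ++ [v]) <+: w :=
      ⟨t, by rw [List.append_assoc, List.singleton_append, ← hBt, hAB]⟩
    have hsuf : w.dropWhile (fun x => decide (x ≠ v)) <:+ w :=
      ⟨w.takeWhile (fun x => decide (x ≠ v)), hAB⟩
    rw [Finset.mem_product]
    constructor
    · rw [mem_prefF]
      exact ⟨hnd.sublist hpre.sublist, by simp, hc.prefix hpre, List.getLast?_concat⟩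
    · rw [mem_suffF]
      refine ⟨hnd.sublist hsuf.sublist, hBh, hc.suffix hsuf, ?_⟩
      intro l hl u
      refine hlast l ?_ u
      rw [← hAB, List.getLast?_append_of_ne_nil _ (by rw [hBt]; simp)]
      exact hl
  · -- backward membership
    rintro ⟨p, s⟩ hq
    rw [Finset.mem_product] at hq
    obtain ⟨hp, hs⟩ := hq
    dsimp only at hp hs
    obtain ⟨hpnd, hpne, hpc, hpl⟩ := (mem_prefF adj).1 hp
    obtain ⟨hsnd, hsh, hsc, hsl⟩ := (mem_suffF adj).1 hs
    have hps : p.dropLast ++ [v] = p := by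
      have h1 := List.getLast?_eq_getLast hpne
      rw [h1] at hpl
      have h2 := Option.some.inj hpl
      conv_rhs => rw [← List.dropLast_concat_getLast hpne]
      rw [h2]
    obtain ⟨t, rfl⟩ : ∃ t, s = v :: t := by
      cases s with
      | nil => simp at hsh
      | cons b t =>
        simp only [List.head?_cons, Option.some.injEq] at hsh
        exact ⟨t, by rw [hsh]⟩
    have hvnotdrop : v ∉ p.dropLast := by
      intro hmem
      have hnd' : (p.dropLast ++ [v]).Nodup := by rw [hps]; exact hpnd
      exact (List.nodup_append.1 hnd').2.2 v hmem v (by simp) rfl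
    rw [mem_walkF]
    have hchain : (p.dropLast ++ v :: t).Chain' (fun a b => adj b a) := by
      have h1 : (p.dropLast ++ [v]).Chain' (fun a b => adj b a) := by rw [hps]; exact hpc
      obtain ⟨c1, _, hlink⟩ := List.isChain_append.1 h1
      exact List.isChain_append.2 ⟨c1, hsc, fun x hx y hy => by
        simp only [List.head?_cons, Option.mem_def, Option.some.injEq] at hy
        exact hy ▸ hlink x hx v (by simp)⟩
    refine ⟨?_, ⟨by simp, hchain, ?_⟩, List.mem_append_right _ List.mem_cons_self⟩
    · refine List.Nodup.append ((List.dropLast_sublist p).nodup hpnd) hsnd ?_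
      intro x hx1 hx2
      have hx1' : x ∈ p := by rw [← hps]; exact List.mem_append_left _ hx1
      have hr1 : Relation.ReflTransGen adj v x := reach_last adj hpc hpl x hx1'
      have hr2 : Relation.ReflTransGen adj x v := reach_head adj hsc hsh x hx2
      rcases Relation.reflTransGen_iff_eq_or_transGen.1 hr1 with rfl | htg
      · exact hvnotdrop hx1
      · exact hacyc v (Relation.TransGen.trans_left htg hr2)
    · intro l hl u
      refine hsl l ?_ u
      rwa [List.getLast?_append_of_ne_nil _ (by simp)] at hl
  · -- left inverse
    intro w hw
    simp only [List.dropLast_concat]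
    exact List.takeWhile_append_dropWhile
  · -- right inverse
    rintro ⟨p, s⟩ hq
    rw [Finset.mem_product] at hq
    obtain ⟨hp, hs⟩ := hq
    dsimp only at hp hs
    obtain ⟨hpnd, hpne, hpc, hpl⟩ := (mem_prefF adj).1 hp
    obtain ⟨hsnd, hsh, hsc, hsl⟩ := (mem_suffF adj).1 hs
    have hps : p.dropLast ++ [v] = p := by
      have h1 := List.getLast?_eq_getLast hpne
      rw [h1] at hpl
      have h2 := Option.some.inj hpl
      conv_rhs => rw [← List.dropLast_concat_getLast hpne]
      rw [h2]
    obtain ⟨t, rfl⟩ : ∃ t, s = v :: t := by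
      cases s with
      | nil => simp at hsh
      | cons b t =>
        simp only [List.head?_cons, Option.some.injEq] at hsh
        exact ⟨t, by rw [hsh]⟩
    have hvnotdrop : v ∉ p.dropLast := by
      intro hmem
      have hnd' : (p.dropLast ++ [v]).Nodup := by rw [hps]; exact hpnd
      exact (List.nodup_append.1 hnd').2.2 v hmem v (by simp) rfl
    have hall : ∀ x ∈ p.dropLast, (fun x => decide (x ≠ v)) x = true := by
      intro x hx
      simp only [decide_eq_true_eq, ne_eq]
      intro hxv
      exact hvnotdrop (hxv ▸ hx)
    have h1 : (p.dropLast ++ v :: t).takeWhile (fun x => decide (x ≠ v)) = p.dropLast := by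
      rw [List.takeWhile_append_of_pos hall]
      simp [List.takeWhile_cons]
    have h2 : (p.dropLast ++ v :: t).dropWhile (fun x => decide (x ≠ v)) = v :: t := by
      rw [List.dropWhile_append_of_pos hall]
      simp [List.dropWhile_cons]
    simp only [h1, h2, Prod.mk.injEq]
    exact ⟨hps, trivial⟩
  · -- products agree
    intro w hw
    obtain ⟨hnd, ⟨hne, hc, hlast⟩, hv⟩ := (mem_walkF adj).1 hw
    have hAB : w.takeWhile (fun x => decide (x ≠ v)) ++ w.dropWhile (fun x => decide (x ≠ v)) = w :=
      List.takeWhile_append_dropWhile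
    have hBh : (w.dropWhile (fun x => decide (x ≠ v))).head? = some v := head?_dropWhile_ne hv
    obtain ⟨t, hBt⟩ : ∃ t, w.dropWhile (fun x => decide (x ≠ v)) = v :: t := by
      cases hB : w.dropWhile (fun x => decide (x ≠ v)) with
      | nil => rw [hB] at hBh; simp at hBh
      | cons b t =>
        rw [hB] at hBh
        simp only [List.head?_cons, Option.some.injEq] at hBh
        exact ⟨t, by rw [hBh]⟩
    dsimp only
    conv_lhs => rw [← hAB, hBt]
    rw [stepProd_append_cons, hBt]

/-! ### visitProb via prefix sums -/

lemma visitProb_eq (hacyc : ∀ x : V, ¬ Relation.TransGen adj x x) (v : V) :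
    visitProb adj v = (Fintype.card V : ℝ)⁻¹ * ∑ p ∈ prefF adj v, stepProd adj p := by
  have h1 : visitProb adj v
      = ∑ w ∈ walkF adj v, (if IsMaxBWalk adj w ∧ v ∈ w then walkProb adj w else 0) := by
    refine tsum_eq_sum ?_
    intro w hw
    rw [if_neg]
    rintro ⟨hmax, hv⟩
    exact hw ((mem_walkF adj).2 ⟨nodup_of_chain adj hacyc hmax.2.1, hmax, hv⟩)
  rw [h1, Finset.sum_congr rfl (fun w hw => by
    rw [if_pos ⟨((mem_walkF adj).1 hw).2.1, ((mem_walkF adj).1 hw).2.2⟩, walkProb_eq]),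
    ← Finset.mul_sum, walk_sum adj hacyc v, suff_sum adj hacyc v, mul_one]

/-! ### Transport along a degree-preserving isomorphism -/

lemma chain_map (φ : V → V) (S : Set V)
    (hpres : ∀ a b, a ∈ S → b ∈ S → adj b a → adj (φ b) (φ a)) :
    ∀ {l : List V}, (∀ x ∈ l, x ∈ S) → l.Chain' (fun a b => adj b a) →
      (l.map φ).Chain' (fun a b => adj b a) := by
  intro l
  induction l with
  | nil => simp
  | cons a t ih =>
    intro hmem hc
    cases t with
    | nil => exact List.isChain_singleton _
    | cons b t' =>
      rw [List.Chain', List.isChain_cons_cons] at hc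
      rw [List.map_cons, List.map_cons, List.Chain', List.isChain_cons_cons]
      refine ⟨hpres a b (hmem a (by simp)) (hmem b (by simp)) hc.1, ?_⟩
      have := ih (fun x hx => hmem x (List.mem_cons_of_mem _ hx)) hc.2
      simpa [List.Chain'] using this

lemma stepProd_map (φ : V → V) :
    ∀ {l : List V}, (∀ x ∈ l, indeg adj (φ x) = indeg adj x) →
      stepProd adj (l.map φ) = stepProd adj l := by
  intro l
  induction l with
  | nil => simp
  | cons a t ih =>
    intro hdeg
    cases t with
    | nil => simp
    | cons b t' =>
      have ih' := ih (fun x hx => hdeg x (List.mem_cons_of_mem _ hx))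
      calc stepProd adj ((a :: b :: t').map φ)
          = ((indeg adj (φ a) : ℝ))⁻¹ * stepProd adj ((b :: t').map φ) := by
            simp only [List.map_cons]
            rw [stepProd_cons_cons]
        _ = ((indeg adj a : ℝ))⁻¹ * stepProd adj (b :: t') := by
            rw [hdeg a (by simp), ih']
        _ = stepProd adj (a :: b :: t') := (stepProd_cons_cons adj a b t').symm

end Stmt5Aux


open Stmt5Aux

/-- If the maximal rooted subgraphs of `v₁` and `v₂` are isomorphic via an
isomorphism mapping `v₁` to `v₂` such that corresponding vertices have the same
in-degree in `G`, then the roots have the same backward-random-walk visit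
probability. -/
theorem stmt5 {V : Type} [Fintype V] [Nonempty V] (adj : V → V → Prop)
    (hacyc : ∀ x : V, ¬ Relation.TransGen adj x x)
    (v₁ v₂ : V)
    (e : reach adj v₁ ≃ reach adj v₂)
    (hadj : ∀ a b : reach adj v₁, adj a.1 b.1 ↔ adj (e a).1 (e b).1)
    (hroot : (e ⟨v₁, Relation.ReflTransGen.refl⟩).1 = v₂)
    (hdeg : ∀ a : reach adj v₁, indeg adj (e a).1 = indeg adj a.1) :
    visitProb adj v₁ = visitProb adj v₂ := by
  classical
  set φ : V → V := fun x => if h : x ∈ reach adj v₁ then (e ⟨x, h⟩).1 else x with hφdef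
  set ψ : V → V := fun x => if h : x ∈ reach adj v₂ then (e.symm ⟨x, h⟩).1 else x with hψdef
  have hφ : ∀ x (h : x ∈ reach adj v₁), φ x = (e ⟨x, h⟩).1 := fun x h => dif_pos h
  have hψ : ∀ x (h : x ∈ reach adj v₂), ψ x = (e.symm ⟨x, h⟩).1 := fun x h => dif_pos h
  have hψφ : ∀ x, x ∈ reach adj v₁ → ψ (φ x) = x := by
    intro x h
    rw [hφ x h, hψ _ ((e ⟨x, h⟩).2), Subtype.coe_eta, Equiv.symm_apply_apply]
  have hφψ : ∀ x, x ∈ reach adj v₂ → φ (ψ x) = x := by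
    intro x h
    rw [hψ x h, hφ _ ((e.symm ⟨x, h⟩).2), Subtype.coe_eta, Equiv.apply_symm_apply]
  have hadjφ : ∀ a b, a ∈ reach adj v₁ → b ∈ reach adj v₁ → adj b a → adj (φ b) (φ a) := by
    intro a b ha hb h
    rw [hφ a ha, hφ b hb]
    exact (hadj ⟨b, hb⟩ ⟨a, ha⟩).1 h
  have hadjψ : ∀ a b, a ∈ reach adj v₂ → b ∈ reach adj v₂ → adj b a → adj (ψ b) (ψ a) := by
    intro a b ha hb h
    rw [hψ a ha, hψ b hb]
    have h2 := hadj (e.symm ⟨b, hb⟩) (e.symm ⟨a, ha⟩)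
    rw [Equiv.apply_symm_apply, Equiv.apply_symm_apply] at h2
    exact h2.2 h
  have hdegφ : ∀ a, a ∈ reach adj v₁ → indeg adj (φ a) = indeg adj a := by
    intro a ha
    rw [hφ a ha]
    exact hdeg ⟨a, ha⟩
  have hdegψ : ∀ a, a ∈ reach adj v₂ → indeg adj (ψ a) = indeg adj a := by
    intro a ha
    rw [hψ a ha]
    have h2 := hdeg (e.symm ⟨a, ha⟩)
    rw [Equiv.apply_symm_apply] at h2
    exact h2.symm
  have hφroot : φ v₁ = v₂ := by
    rw [hφ v₁ Relation.ReflTransGen.refl]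
    exact hroot
  have hψroot : ψ v₂ = v₁ := by
    rw [hψ v₂ Relation.ReflTransGen.refl]
    have h2 : e ⟨v₁, Relation.ReflTransGen.refl⟩ = ⟨v₂, Relation.ReflTransGen.refl⟩ :=
      Subtype.ext hroot
    rw [← h2, Equiv.symm_apply_apply]
  have hmem₁ : ∀ p ∈ prefF adj v₁, ∀ x ∈ p, x ∈ reach adj v₁ := by
    intro p hp x hx
    obtain ⟨_, _, hpc, hpl⟩ := (mem_prefF adj).1 hp
    exact reach_last adj hpc hpl x hx
  have hmem₂ : ∀ p ∈ prefF adj v₂, ∀ x ∈ p, x ∈ reach adj v₂ := by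
    intro p hp x hx
    obtain ⟨_, _, hpc, hpl⟩ := (mem_prefF adj).1 hp
    exact reach_last adj hpc hpl x hx
  have key : ∑ p ∈ prefF adj v₁, stepProd adj p = ∑ q ∈ prefF adj v₂, stepProd adj q := by
    refine Finset.sum_nbij' (List.map φ) (List.map ψ) ?_ ?_ ?_ ?_ ?_
    · intro p hp
      obtain ⟨hnd, hne, hc, hl⟩ := (mem_prefF adj).1 hp
      rw [mem_prefF]
      refine ⟨hnd.map_on ?_, by simpa using hne,
        chain_map adj φ (reach adj v₁) hadjφ (hmem₁ p hp) hc, ?_⟩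
      · intro x hx y hy hxy
        have hx' := hmem₁ p hp x hx
        have hy' := hmem₁ p hp y hy
        rw [hφ x hx', hφ y hy'] at hxy
        exact congrArg Subtype.val (e.injective (Subtype.ext hxy))
      · rw [List.getLast?_map, hl, Option.map_some, hφroot]
    · intro q hq
      obtain ⟨hnd, hne, hc, hl⟩ := (mem_prefF adj).1 hq
      rw [mem_prefF]
      refine ⟨hnd.map_on ?_, by simpa using hne,
        chain_map adj ψ (reach adj v₂) hadjψ (hmem₂ q hq) hc, ?_⟩
      · intro x hx y hy hxy
        have hx' := hmem₂ q hq x hx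
        have hy' := hmem₂ q hq y hy
        rw [hψ x hx', hψ y hy'] at hxy
        exact congrArg Subtype.val (e.symm.injective (Subtype.ext hxy))
      · rw [List.getLast?_map, hl, Option.map_some, hψroot]
    · intro p hp
      rw [List.map_map]
      exact (List.map_congr_left (fun x hx => hψφ x (hmem₁ p hp x hx))).trans (List.map_id p)
    · intro q hq
      rw [List.map_map]
      exact (List.map_congr_left (fun x hx => hφψ x (hmem₂ q hq x hx))).trans (List.map_id q)
    · intro p hp
      exact (stepProd_map adj φ (fun x hx => hdegφ x (hmem₁ p hp x hx))).symm
  rw [visitProb_eq adj hacyc v₁, visitProb_eq adj hacyc v₂, key]
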